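/- Let X be a finite set with |X| = n ≥ 2, let C be a cluster system for X, and let A ⊆ X with |A| ≥ 2. Then the following four assertions are equivalent: (i) A belongs to the smallest weak patchwork containing C (equivalently, A belongs to every weak patchwork containing C); (ii) the incidence graph Γ(A;C), with vertex set A and an edge between distinct x, y ∈ A whenever there exists B ∈ C with {x, y} ⊆ B ⊆ A, is connected; (iii) there exist k < |A| and clusters A₁, …, A_k ∈ C with A = A₁ ∪ ⋯ ∪ A_k and (A₁ ∪ ⋯ ∪ A_{j−1}) ∦ A_j for all j = 2, …, k; (iv) A ∈ ext^{wk}_{n−1}(C). -/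

import Mathlib

/-- Two subsets `A`, `B` are compatible if `A ∩ B ∈ {∅, A, B}`. -/
def Compatible {α : Type*} [DecidableEq α] (A B : Finset α) : Prop :=
  A ∩ B = ∅ ∨ A ∩ B = A ∨ A ∩ B = B

/-- A cluster system: a collection of non-empty subsets of `X`. -/
def IsCS {α : Type*} [DecidableEq α] (C : Set (Finset α)) : Prop :=
  ∀ A ∈ C, A.Nonempty

/-- The adjoint `C*`: all non-empty subsets of `X` compatible with every member of `C`. -/
def adjS {α : Type*} [DecidableEq α] (C : Set (Finset α)) : Set (Finset α) :=
  {A | A.Nonempty ∧ ∀ B ∈ C, Compatible A B}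

/-- A hierarchy: a cluster system whose members are pairwise compatible. -/
def IsHierarchyS {α : Type*} [DecidableEq α] (C : Set (Finset α)) : Prop :=
  IsCS C ∧ ∀ A ∈ C, ∀ B ∈ C, Compatible A B

/-- A maximal hierarchy: a hierarchy not properly contained in any other hierarchy. -/
def IsMaxHierarchyS {α : Type*} [DecidableEq α] (H : Set (Finset α)) : Prop :=
  IsHierarchyS H ∧ ∀ D : Set (Finset α), IsHierarchyS D → H ⊆ D → D = H

/-- A weak patchwork: incompatible members have their union in the system. -/
def IsWeakPW {α : Type*} [DecidableEq α] (C : Set (Finset α)) : Prop :=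
  ∀ A ∈ C, ∀ B ∈ C, ¬Compatible A B → A ∪ B ∈ C

/-- A patchwork: incompatible members have both intersection and union in the system. -/
def IsPW {α : Type*} [DecidableEq α] (C : Set (Finset α)) : Prop :=
  ∀ A ∈ C, ∀ B ∈ C, ¬Compatible A B → A ∩ B ∈ C ∧ A ∪ B ∈ C

/-- A saturated patchwork: for incompatible members `A`, `B`, the five sets
`A ∩ B`, `A ∪ B`, `A - B`, `B - A`, `(A ∪ B) - (A ∩ B)` lie in the system. -/
def IsSatPW {α : Type*} [DecidableEq α] (C : Set (Finset α)) : Prop :=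
  ∀ A ∈ C, ∀ B ∈ C, ¬Compatible A B →
    A ∩ B ∈ C ∧ A ∪ B ∈ C ∧ A \ B ∈ C ∧ B \ A ∈ C ∧ (A ∪ B) \ (A ∩ B) ∈ C

/-- The trivial cluster system: all singletons together with `X` itself. -/
def CtrivS (α : Type*) [Fintype α] [DecidableEq α] : Set (Finset α) :=
  {A | (∃ x : α, A = {x}) ∨ A = Finset.univ}

/-- `C` is ample: for every arc `(C₂, C₁)` of the Hasse diagram (i.e. `C₂ ⊊ C₁`
with nothing of `C` strictly between), `C₁ - C₂ ∈ C`. -/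
def IsAmpleS {α : Type*} [DecidableEq α] (C : Set (Finset α)) : Prop :=
  ∀ C₁ ∈ C, ∀ C₂ ∈ C, C₂ ⊂ C₁ → (∀ B ∈ C, ¬(C₂ ⊂ B ∧ B ⊂ C₁)) → C₁ \ C₂ ∈ C

/-- The weak `k`-extensions of a cluster system. -/
def extWk {α : Type*} [DecidableEq α] (C : Set (Finset α)) : ℕ → Set (Finset α)
  | 0 => C
  | k + 1 => extWk C k ∪
      {D | ∃ A ∈ extWk C k, ∃ B ∈ extWk C k, ¬Compatible A B ∧ D = A ∪ B}

section Aux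

set_option linter.unusedSectionVars false

variable {α : Type*} [DecidableEq α] {C : Set (Finset α)}

lemma not_compatible_iff {A B : Finset α} :
    ¬Compatible A B ↔ (A ∩ B).Nonempty ∧ ¬A ⊆ B ∧ ¬B ⊆ A := by
  unfold Compatible
  rw [Finset.nonempty_iff_ne_empty, Finset.inter_eq_left, Finset.inter_eq_right]
  tauto

/-- The "edge" relation on `α` induced by clusters of `C` inside `A`. -/
def Rr (C : Set (Finset α)) (A : Finset α) (x y : α) : Prop :=
  x ≠ y ∧ ∃ B ∈ C, x ∈ B ∧ y ∈ B ∧ B ⊆ A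

lemma Rr.symm' {A : Finset α} : Symmetric (Rr C A) := by
  rintro x y ⟨hne, B, hB, hx, hy, hBA⟩; exact ⟨hne.symm, B, hB, hy, hx, hBA⟩

/-- Abstract connectivity of the incidence graph. -/
def ConnA (C : Set (Finset α)) (A : Finset α) : Prop :=
  ∀ x ∈ A, ∀ y ∈ A, Relation.ReflTransGen (Rr C A) x y

lemma connA_of_mem (hC : IsCS C) {A : Finset α} (hA : A ∈ C) : ConnA C A := by
  intro x hx y hy
  rcases eq_or_ne x y with rfl | hne
  · exact .refl
  · exact .single ⟨hne, A, hA, hx, hy, le_refl A⟩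

lemma rr_mono {A A' : Finset α} (h : A ⊆ A') {x y : α} (hr : Rr C A x y) :
    Rr C A' x y := by
  obtain ⟨hne, B, hB, hx, hy, hBA⟩ := hr
  exact ⟨hne, B, hB, hx, hy, hBA.trans h⟩

lemma connA_union {A₁ A₂ : Finset α} (h1 : ConnA C A₁) (h2 : ConnA C A₂)
    (hi : (A₁ ∩ A₂).Nonempty) : ConnA C (A₁ ∪ A₂) := by
  obtain ⟨z, hz⟩ := hi
  have hz1 : z ∈ A₁ := (Finset.mem_inter.mp hz).1
  have hz2 : z ∈ A₂ := (Finset.mem_inter.mp hz).2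
  have key : ∀ x ∈ A₁ ∪ A₂, Relation.ReflTransGen (Rr C (A₁ ∪ A₂)) x z := by
    intro x hx
    rcases Finset.mem_union.mp hx with hx | hx
    · exact Relation.ReflTransGen.mono (fun a b => rr_mono Finset.subset_union_left) _ _ (h1 x hx z hz1)
    · exact Relation.ReflTransGen.mono (fun a b => rr_mono Finset.subset_union_right) _ _ (h2 x hx z hz2)
  intro x hx y hy
  exact (key x hx).trans
    ((@Relation.ReflTransGen.stdSymm _ _ ⟨fun _ _ h => Rr.symm' h⟩).symm _ _ (key y hy))

/-- crossing-edge lemma -/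
lemma crossing {r : α → α → Prop} {S : Finset α} {x y : α}
    (h : Relation.ReflTransGen r x y) :
    x ∈ S → y ∉ S → ∃ a b, r a b ∧ a ∈ S ∧ b ∉ S := by
  induction h with
  | refl => exact fun hx hy => absurd hx hy
  | @tail b c hxb hbc ih =>
    intro hx hy
    by_cases hb : b ∈ S
    · exact ⟨b, c, hbc, hb, hy⟩
    · exact ih hx hb

/-- lifting abstract connectivity to the subtype graph -/
lemma toSub {A : Finset α} {x y : α} (hx : x ∈ A)
    (h : Relation.ReflTransGen (Rr C A) x y) :
    ∀ hy : y ∈ A,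
      Relation.ReflTransGen
        (SimpleGraph.fromRel
          (fun x y : {z : α // z ∈ A} => ∃ B ∈ C, ↑x ∈ B ∧ ↑y ∈ B ∧ B ⊆ A)).Adj
        ⟨x, hx⟩ ⟨y, hy⟩ := by
  induction h with
  | refl => intro hy; exact .refl
  | @tail b c hxb hbc ih =>
    intro hy
    obtain ⟨hne, B, hB, hbB, hcB, hBA⟩ := hbc
    have hb : b ∈ A := hBA hbB
    refine (ih hb).tail ?_
    rw [SimpleGraph.fromRel_adj]
    exact ⟨fun h => hne (congrArg Subtype.val h), Or.inl ⟨B, hB, hbB, hcB, hBA⟩⟩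

lemma connected_iff_connA {A : Finset α} (hA : A.Nonempty) :
    (SimpleGraph.fromRel
      (fun x y : {z : α // z ∈ A} => ∃ B ∈ C, ↑x ∈ B ∧ ↑y ∈ B ∧ B ⊆ A)).Connected
    ↔ ConnA C A := by
  constructor
  · intro h x hx y hy
    have := (SimpleGraph.reachable_iff_reflTransGen _ _).mp
      (h.preconnected ⟨x, hx⟩ ⟨y, hy⟩)
    refine Relation.ReflTransGen.lift (f := Subtype.val) (fun a b hab => ?_) _ _ this
    rw [SimpleGraph.fromRel_adj] at hab
    obtain ⟨hne, hrel⟩ := hab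
    have hne' : (a : α) ≠ b := fun h => hne (Subtype.ext h)
    rcases hrel with ⟨B, hB, ha, hb, hBA⟩ | ⟨B, hB, hb, ha, hBA⟩
    · exact ⟨hne', B, hB, ha, hb, hBA⟩
    · exact ⟨hne', B, hB, ha, hb, hBA⟩
  · intro h
    obtain ⟨x0, hx0⟩ := hA
    haveI : Nonempty {z : α // z ∈ A} := ⟨⟨x0, hx0⟩⟩
    refine ⟨fun a b => ?_⟩
    exact (SimpleGraph.reachable_iff_reflTransGen _ _).mpr
      (toSub a.2 (h a a.2 b b.2) b.2)

/-- invariant for the greedy construction -/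
def Pref (C : Set (Finset α)) (P : Finset α) : Prop :=
  ∃ (k : ℕ) (f : ℕ → Finset α), 0 < k ∧ k + 1 ≤ P.card ∧ (∀ i < k, f i ∈ C) ∧
    P = (Finset.range k).sup f ∧
    ∀ j, 1 ≤ j → j < k → ¬Compatible ((Finset.range j).sup f) (f j)

lemma pref_single {B : Finset α} (hB : B ∈ C) (hB2 : 2 ≤ B.card) : Pref C B := by
  refine ⟨1, fun _ => B, one_pos, hB2, fun i _ => hB, ?_, ?_⟩
  · simp [Finset.range_one]
  · omega

lemma build (hconn : ConnA C A) :
    ∀ m (P : Finset α), (A \ P).card ≤ m → P ⊆ A → Pref C P → Pref C A := by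
  intro m
  induction m with
  | zero =>
    intro P hm hPA hP
    have : A \ P = ∅ := Finset.card_eq_zero.mp (Nat.le_zero.mp hm)
    have hAP : A ⊆ P := by
      intro a ha
      by_contra hc
      exact absurd (Finset.mem_sdiff.mpr ⟨ha, hc⟩) (by simp [this])
    rw [Finset.Subset.antisymm hAP hPA]
    exact hP
  | succ m ih =>
    intro P hm hPA hP
    by_cases hPA' : A ⊆ P
    · rw [Finset.Subset.antisymm hPA' hPA]
      exact hP
    · obtain ⟨y, hyA, hyP⟩ := Finset.exists_of_ssubset ⟨hPA, hPA'⟩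
      obtain ⟨k, f, hk, hkc, hfC, hPf, hpre⟩ := hP
      have hPne : P.Nonempty := Finset.card_pos.mp (by omega)
      obtain ⟨x, hxP⟩ := hPne
      obtain ⟨a, b, hr, haP, hbP⟩ := crossing (hconn x (hPA hxP) y hyA) hxP hyP
      obtain ⟨hne, B, hB, haB, hbB, hBA⟩ := hr
      have hb A' : b ∈ A' → ¬ A' ⊆ P := fun h hc => hbP (hc h)
      have hbA : b ∈ A := hBA hbB
      have hbAP : b ∈ A \ P := Finset.mem_sdiff.mpr ⟨hbA, hbP⟩
      by_cases hPB : P ⊆ B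
      · -- restart with B
        have hcardB : 2 ≤ B.card :=
          le_trans (by omega) (Finset.card_le_card hPB)
        have hstep : (A \ B).card < (A \ P).card := by
          apply Finset.card_lt_card
          refine (Finset.ssubset_iff_of_subset
            (Finset.sdiff_subset_sdiff (le_refl A) hPB)).mpr ⟨b, hbAP, fun h => ?_⟩
          exact (Finset.mem_sdiff.mp h).2 hbB
        exact ih B (by omega) hBA (pref_single hB hcardB)
      · -- append B
        set P' := P ∪ B with hP'
        have hbP' : b ∈ P' := Finset.mem_union_right _ hbB
        have hcard' : k + 2 ≤ P'.card := by
          have : insert b P ⊆ P' := by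
            intro t ht
            rcases Finset.mem_insert.mp ht with rfl | ht
            · exact hbP'
            · exact Finset.mem_union_left _ ht
          have h1 : (insert b P).card = P.card + 1 := Finset.card_insert_of_notMem hbP
          have := Finset.card_le_card this
          omega
        have hnotc : ¬Compatible P B := by
          rw [not_compatible_iff]
          exact ⟨⟨a, Finset.mem_inter.mpr ⟨haP, haB⟩⟩, hPB, hb B hbB⟩
        set f' : ℕ → Finset α := fun i => if i = k then B else f i with hf'
        have hsup : ∀ j ≤ k, (Finset.range j).sup f' = (Finset.range j).sup f := by
          intro j hj
          apply Finset.sup_congr rfl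
          intro i hi
          have : i ≠ k := by have := Finset.mem_range.mp hi; omega
          simp [hf', this]
        have hPref' : Pref C P' := by
          refine ⟨k + 1, f', by omega, hcard', ?_, ?_, ?_⟩
          · intro i hik
            rcases eq_or_ne i k with rfl | hik'
            · simp [hf', hB]
            · have : i < k := by omega
              simpa [hf', hik'] using hfC i this
          · rw [Finset.range_add_one, Finset.sup_insert, hsup k (le_refl k), ← hPf]
            simp [hf', Finset.union_comm, hP']
          · intro j hj1 hjk
            rcases eq_or_ne j k with rfl | hjk'
            · rw [hsup j (le_refl j), ← hPf]
              simpa [hf'] using hnotc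
            · have hjk2 : j < k := by omega
              rw [hsup j (by omega)]
              simpa [hf', hjk'] using hpre j hj1 hjk2
        have hstep : (A \ P').card < (A \ P).card := by
          apply Finset.card_lt_card
          refine (Finset.ssubset_iff_of_subset
            (Finset.sdiff_subset_sdiff (le_refl A) Finset.subset_union_left)).mpr
            ⟨b, hbAP, fun h => ?_⟩
          exact (Finset.mem_sdiff.mp h).2 hbP'
        exact ih P' (by omega) (Finset.union_subset hPA hBA) hPref'

lemma extWk_succ_subset (k : ℕ) : extWk C k ⊆ extWk C (k + 1) :=
  Set.subset_union_left

lemma extWk_mono {k m : ℕ} (h : k ≤ m) : extWk C k ⊆ extWk C m := by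
  induction m with
  | zero => simpa [Nat.le_zero.mp h]
  | succ m ih =>
    rcases Nat.lt_or_ge k (m + 1) with h' | h'
    · exact (ih (by omega)).trans (extWk_succ_subset m)
    · have : k = m + 1 := by omega
      simp [this]

lemma extWk_subset_PW {D : Set (Finset α)} (hD : IsWeakPW D) (hCD : C ⊆ D) :
    ∀ m, extWk C m ⊆ D := by
  intro m
  induction m with
  | zero => exact hCD
  | succ m ih =>
    rintro x (hx | ⟨A1, h1, A2, h2, hinc, rfl⟩)
    · exact ih hx
    · exact hD A1 (ih h1) A2 (ih h2) hinc

end Aux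

/-- For `|X| = n ≥ 2`, a cluster system `C` and `A ⊆ X` with `|A| ≥ 2`, the following
are equivalent: (i) `A` lies in every weak patchwork containing `C`; (ii) the incidence
graph `Γ(A;C)` is connected; (iii) `A` is a union `A₁ ∪ ⋯ ∪ A_k` of `k < |A|` clusters
of `C` whose successive prefix unions are incompatible with the next cluster;
(iv) `A ∈ ext^{wk}_{n-1}(C)`. -/
theorem stmt16 {α : Type*} [Fintype α] [DecidableEq α] (n : ℕ) (hn : 2 ≤ n)
    (hcard : Fintype.card α = n) (C : Set (Finset α)) (hC : IsCS C)
    (A : Finset α) (hA : 2 ≤ A.card) :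
    [(∀ D : Set (Finset α), IsWeakPW D → C ⊆ D → A ∈ D),
     (SimpleGraph.fromRel
        (fun x y : {z : α // z ∈ A} => ∃ B ∈ C, ↑x ∈ B ∧ ↑y ∈ B ∧ B ⊆ A)).Connected,
     (∃ (k : ℕ) (f : ℕ → Finset α), 0 < k ∧ k < A.card ∧ (∀ i < k, f i ∈ C) ∧
        A = (Finset.range k).sup f ∧
        ∀ j, 1 ≤ j → j < k → ¬Compatible ((Finset.range j).sup f) (f j)),
     A ∈ extWk C (n - 1)].TFAE := by
  have hAne : A.Nonempty := Finset.card_pos.mp (by omega)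
  tfae_have 1 → 2 := by
    intro h1
    have hmem : A ∈ {B : Finset α | B.Nonempty ∧ ConnA C B} := by
      refine h1 _ ?_ ?_
      · rintro B1 ⟨hB1ne, hB1⟩ B2 ⟨hB2ne, hB2⟩ hinc
        refine ⟨hB1ne.mono Finset.subset_union_left, ?_⟩
        apply connA_union hB1 hB2
        rw [not_compatible_iff] at hinc
        exact hinc.1
      · intro B hB
        exact ⟨hC B hB, connA_of_mem hC hB⟩
    exact (connected_iff_connA hAne).mpr hmem.2
  tfae_have 2 → 3 := by
    intro h2
    have hconn : ConnA C A := (connected_iff_connA hAne).mp h2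
    -- find an initial cluster of size ≥ 2 inside A
    obtain ⟨x, hx, y, hy, hxy⟩ := Finset.one_lt_card.mp (by omega : 1 < A.card)
    have hchain := hconn x hx y hy
    obtain heq | ⟨c, hxc, -⟩ := Relation.ReflTransGen.cases_head hchain
    · exact absurd heq hxy
    obtain ⟨hnexc, B, hB, hxB, hcB, hBA⟩ := hxc
    have hB2 : 2 ≤ B.card := Finset.one_lt_card.mpr ⟨x, hxB, c, hcB, hnexc⟩
    obtain ⟨k, f, hk, hkc, hfC, hPf, hpre⟩ :=
      build hconn (A \ B).card B (le_refl _) hBA (pref_single hB hB2)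
    exact ⟨k, f, hk, by omega, hfC, hPf, hpre⟩
  tfae_have 3 → 4 := by
    rintro ⟨k, f, hk, hkA, hfC, hAf, hpre⟩
    have key : ∀ j < k, (Finset.range (j + 1)).sup f ∈ extWk C j := by
      intro j
      induction j with
      | zero =>
        intro _
        simpa [extWk, Finset.range_one] using hfC 0 hk
      | succ j ihj =>
        intro hjk
        have hQ : (Finset.range (j + 1)).sup f ∈ extWk C j := ihj (by omega)
        have hf : f (j + 1) ∈ extWk C j := extWk_mono (Nat.zero_le j) (hfC (j + 1) hjk)
        have hinc := hpre (j + 1) (by omega) hjk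
        refine Set.mem_union_right _
          ⟨(Finset.range (j + 1)).sup f, hQ, f (j + 1), hf, hinc, ?_⟩
        rw [Finset.range_add_one, Finset.sup_insert, Finset.sup_eq_union,
          Finset.union_comm]
    have hAcard : A.card ≤ n := hcard ▸ Finset.card_le_univ A
    have hk1 : k - 1 ≤ n - 1 := by omega
    have : A ∈ extWk C (k - 1) := by
      have := key (k - 1) (by omega)
      rwa [show k - 1 + 1 = k by omega, ← hAf] at this
    exact extWk_mono hk1 this
  tfae_have 4 → 1 := by
    intro h4 D hD hCD
    exact extWk_subset_PW hD hCD (n - 1) h4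
  tfae_finish
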